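/- arXiv:2504.07917 — 8 statements merged into one kernel-verified Lean document; each statement's English description precedes it below -/
import Mathlib

section
/- Let 0 → ℤ →ι S →p G → 0 be a short exact sequence of abelian groups and let χ : S → ℤ be a group homomorphism with χ(ι(n)) = 2n for all n ∈ ℤ. If the sequence splits, i.e. there exists a group homomorphism ψ : S → ℤ with ψ(ι(n)) = n for all n ∈ ℤ, then every x ∈ S whose image p(x) is a torsion element of G satisfies that χ(x) is even. In particular, if there exists x ∈ S with p(x) torsion in G and χ(x) odd, then the sequence does not split. -/
/-- If the short exact sequence `0 → ℤ → S → G → 0` (with `χ ∘ ι = 2·`)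
splits, then every `x ∈ S` whose image `p x` is torsion in `G` has even `χ x`;
in particular, if some `x` has `p x` torsion and `χ x` odd, the sequence does not split. -/
theorem skk_even_dim_split_implies_even_euler_on_torsion
    {S G : Type*} [AddCommGroup S] [AddCommGroup G]
    (ι : ℤ →+ S) (p : S →+ G)
    (hι : Function.Injective ι) (hp : Function.Surjective p)
    (hexact : ι.range = p.ker)
    (χ : S →+ ℤ) (hχ : ∀ n : ℤ, χ (ι n) = 2 * n) :
    ((∃ ψ : S →+ ℤ, ∀ n : ℤ, ψ (ι n) = n) →
      ∀ x : S, (∃ k : ℕ, 0 < k ∧ k • p x = 0) → Even (χ x)) ∧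
    ((∃ x : S, (∃ k : ℕ, 0 < k ∧ k • p x = 0) ∧ Odd (χ x)) →
      ¬ (∃ ψ : S →+ ℤ, ∀ n : ℤ, ψ (ι n) = n)) := by
  have main : (∃ ψ : S →+ ℤ, ∀ n : ℤ, ψ (ι n) = n) →
      ∀ x : S, (∃ k : ℕ, 0 < k ∧ k • p x = 0) → Even (χ x) := by
    rintro ⟨ψ, hψ⟩ x ⟨k, hk, hkx⟩
    have hker : k • x ∈ p.ker := by
      simp [AddMonoidHom.mem_ker, map_nsmul, hkx]
    rw [← hexact] at hker
    obtain ⟨m, hm⟩ := hker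
    have h1 : (k : ℤ) * ψ x = m := by
      have h := congrArg ψ hm
      rw [hψ, map_nsmul, nsmul_eq_mul] at h; exact h.symm
    have h2 : (k : ℤ) * χ x = 2 * m := by
      have h := congrArg χ hm
      rw [hχ, map_nsmul, nsmul_eq_mul] at h; exact h.symm
    have h3 : (k : ℤ) * χ x = (k : ℤ) * (2 * ψ x) := by
      rw [h2, ← h1]; ring
    have hk0 : (k : ℤ) ≠ 0 := by exact_mod_cast hk.ne'
    have : χ x = 2 * ψ x := mul_left_cancel₀ hk0 h3
    exact ⟨ψ x, by omega⟩
  exact ⟨main, fun ⟨x, hx, hodd⟩ hsplit => (Int.not_odd_iff_even.mpr (main hsplit x hx)) hodd⟩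
end

section
/- Let 0 → ℤ →ι S →p G → 0 be a short exact sequence of abelian groups and let χ : S → ℤ be a group homomorphism with χ(ι(n)) = 2n for all n ∈ ℤ. Assume that G is finitely generated and that every x ∈ S whose image p(x) is a torsion element of G satisfies that χ(x) is even. Then the sequence splits: there exists a group homomorphism ψ : S → ℤ with ψ(ι(n)) = n for all n ∈ ℤ. -/
/-- If `G` is finitely generated and every `x ∈ S` whose image `p x` is
torsion in `G` has even `χ x`, then the short exact sequence `0 → ℤ → S → G → 0`
(with `χ ∘ ι = 2·`) splits. -/
theorem skk_even_dim_splits_of_even_euler_on_torsion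
    {S G : Type*} [AddCommGroup S] [AddCommGroup G]
    (ι : ℤ →+ S) (p : S →+ G)
    (hι : Function.Injective ι) (hp : Function.Surjective p)
    (hexact : ι.range = p.ker)
    (χ : S →+ ℤ) (hχ : ∀ n : ℤ, χ (ι n) = 2 * n)
    (hfg : AddGroup.FG G)
    (heven : ∀ x : S, (∃ k : ℕ, 0 < k ∧ k • p x = 0) → Even (χ x)) :
    ∃ ψ : S →+ ℤ, ∀ n : ℤ, ψ (ι n) = n := by
  haveI : Module.Finite ℤ G := Module.Finite.iff_addGroup_fg.mpr hfg
  set T : Submodule ℤ G := Submodule.torsion ℤ G with hT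
  set F := G ⧸ T
  haveI : Module.Free ℤ F := Module.free_of_finite_type_torsion_free'
  set q : S →ₗ[ℤ] F := T.mkQ ∘ₗ p.toIntLinearMap with hq
  have hqsurj : Function.Surjective q := (T.mkQ_surjective).comp hp
  obtain ⟨s, hs⟩ := Module.projective_lifting_property q LinearMap.id hqsurj
  -- retraction r x = x - s (q x)
  set r : S →+ S := AddMonoidHom.id S - (s ∘ₗ q).toAddMonoidHom with hr
  have hr_apply : ∀ x, r x = x - s (q x) := fun x => rfl
  have hqr : ∀ x : S, q (r x) = 0 := by
    intro x
    have : q (s (q x)) = q x := by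
      have := LinearMap.congr_fun hs (q x)
      simpa using this
    simp [hr_apply, this]
  have htor : ∀ x : S, Even (χ (r x)) := by
    intro x
    apply heven
    have hmem : p (r x) ∈ T := by
      have h0 : T.mkQ (p (r x)) = 0 := hqr x
      rwa [Submodule.mkQ_apply, Submodule.Quotient.mk_eq_zero] at h0
    obtain ⟨⟨a, ha⟩, hax⟩ := hmem
    have hax' : a • p (r x) = 0 := by simpa [Submonoid.smul_def] using hax
    have ha0 : a ≠ 0 := nonZeroDivisors.ne_zero ha
    refine ⟨a.natAbs, Int.natAbs_pos.mpr ha0, ?_⟩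
    rw [← natCast_zsmul]
    rcases Int.natAbs_eq a with h | h
    · rw [← h]; exact hax'
    · rw [show ((a.natAbs : ℤ)) = -a by omega, neg_zsmul, hax', neg_zero]
  -- define ψ
  choose h hh using htor
  have hh2 : ∀ x, χ (r x) = 2 * h x := by
    intro x; rw [hh x]; ring
  refine ⟨{ toFun := h, map_zero' := ?_, map_add' := ?_ }, ?_⟩
  · have := hh2 0
    simp only [map_zero] at this
    omega
  · intro x y
    show h (x + y) = h x + h y
    have hx := hh2 x; have hy := hh2 y; have hxy := hh2 (x + y)
    rw [map_add, map_add] at hxy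
    omega
  · intro n
    have hrι : r (ι n) = ι n := by
      have hpι : p (ι n) = 0 := by
        have : ι n ∈ p.ker := hexact ▸ ⟨n, rfl⟩
        exact this
      simp [hr_apply, hq, hpι]
    have := hh2 (ι n)
    rw [hrι, hχ] at this
    show h (ι n) = n
    omega
end

section
/- Let 0 → ℤ →ι S →p G → 0 be a short exact sequence of abelian groups, let χ : S → ℤ be a group homomorphism with χ(ι(n)) = 2n for all n ∈ ℤ, and let w : G → ℤ/2 be a group homomorphism such that w(p(x)) equals χ(x) mod 2 for all x ∈ S. Then the homomorphism S → G × ℤ given by x ↦ (p(x), χ(x)) is injective, and its image is exactly the pullback subgroup G ×_{ℤ/2} ℤ = {(g,n) ∈ G × ℤ : w(g) = n mod 2}; consequently S is isomorphic to G ×_{ℤ/2} ℤ via x ↦ (p(x), χ(x)). -/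
/-- The pullback `G ×_{ℤ/2} ℤ` of a homomorphism `w : G → ℤ/2` and the mod-2
reduction `ℤ → ℤ/2`, as a subgroup of `G × ℤ`. -/
def pullbackZmodTwo {G : Type*} [AddCommGroup G] (w : G →+ ZMod 2) :
    AddSubgroup (G × ℤ) where
  carrier := {q : G × ℤ | w q.1 = (q.2 : ZMod 2)}
  zero_mem' := by simp
  add_mem' := by
    intro a b ha hb
    simp only [Set.mem_setOf_eq, Prod.fst_add, Prod.snd_add, map_add, Int.cast_add] at *
    rw [ha, hb]
  neg_mem' := by
    intro a ha
    simp only [Set.mem_setOf_eq, Prod.fst_neg, Prod.snd_neg, map_neg, Int.cast_neg] at *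
    rw [ha]

/-- Given the short exact sequence `0 → ℤ → S → G → 0` with `χ ∘ ι = 2·`
and `w : G → ℤ/2` with `w (p x) = χ x mod 2`, the map `x ↦ (p x, χ x)` is injective
with image the pullback subgroup `G ×_{ℤ/2} ℤ`, and induces an isomorphism
`S ≅ G ×_{ℤ/2} ℤ`. -/
theorem skk_even_dim_pullback_description
    {S G : Type*} [AddCommGroup S] [AddCommGroup G]
    (ι : ℤ →+ S) (p : S →+ G)
    (hι : Function.Injective ι) (hp : Function.Surjective p)
    (hexact : ι.range = p.ker)
    (χ : S →+ ℤ) (hχ : ∀ n : ℤ, χ (ι n) = 2 * n)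
    (w : G →+ ZMod 2) (hw : ∀ x : S, w (p x) = ((χ x : ℤ) : ZMod 2)) :
    Function.Injective (fun x : S => ((p x, χ x) : G × ℤ)) ∧
    Set.range (fun x : S => ((p x, χ x) : G × ℤ))
      = {q : G × ℤ | w q.1 = (q.2 : ZMod 2)} ∧
    ∃ e : S ≃+ pullbackZmodTwo w, ∀ x : S, (e x : G × ℤ) = (p x, χ x) := by
  have hinj : Function.Injective (fun x : S => ((p x, χ x) : G × ℤ)) := by
    intro x y hxy
    simp only [Prod.mk.injEq] at hxy
    have hker : x - y ∈ p.ker := by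
      simp [AddMonoidHom.mem_ker, hxy.1]
    rw [← hexact] at hker
    obtain ⟨n, hn⟩ := hker
    have h0 : χ (x - y) = 0 := by simp [hxy.2]
    rw [← hn, hχ] at h0
    have hn0 : n = 0 := by omega
    have : x - y = 0 := by rw [← hn, hn0]; simp
    exact sub_eq_zero.mp this
  have hrange : Set.range (fun x : S => ((p x, χ x) : G × ℤ))
      = {q : G × ℤ | w q.1 = (q.2 : ZMod 2)} := by
    ext q
    constructor
    · rintro ⟨x, rfl⟩
      exact hw x
    · rintro hq
      obtain ⟨x, hx⟩ := hp q.1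
      have hmod : ((χ x : ℤ) : ZMod 2) = ((q.2 : ℤ) : ZMod 2) := by
        rw [← hw x, hx]; exact hq
      have h2 : (2 : ℤ) ∣ q.2 - χ x := by
        have := (ZMod.intCast_eq_intCast_iff' _ _ _).mp hmod
        omega
      obtain ⟨m, hm⟩ := h2
      refine ⟨x + ι m, ?_⟩
      have hpι : p (ι m) = 0 := by
        have : ι m ∈ p.ker := hexact ▸ ⟨m, rfl⟩
        exact this
      have : χ (x + ι m) = q.2 := by
        rw [map_add, hχ]; omega
      simp [map_add, hpι, hx, this, Prod.ext_iff]
  refine ⟨hinj, hrange, ?_⟩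
  have hmem : ∀ x : S, ((p x, χ x) : G × ℤ) ∈ pullbackZmodTwo w := fun x => hw x
  let f : S →+ pullbackZmodTwo w :=
    { toFun := fun x => ⟨(p x, χ x), hmem x⟩
      map_zero' := by ext <;> simp
      map_add' := fun a b => by ext <;> simp }
  have hbij : Function.Bijective f := ⟨?_, ?_⟩
  · exact ⟨AddEquiv.ofBijective f hbij, fun x => rfl⟩
  · intro a b hab
    exact hinj (Subtype.ext_iff.mp hab)
  · rintro ⟨q, hq⟩
    have : q ∈ Set.range (fun x : S => ((p x, χ x) : G × ℤ)) := hrange ▸ hq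
    obtain ⟨x, hx⟩ := this
    exact ⟨x, Subtype.ext hx⟩
end

section
/- Let 0 → ℤ →ι S →p G → 0 be a short exact sequence of abelian groups with G a torsion group, and let χ : S → ℤ be a group homomorphism with χ(ι(n)) = 2n for all n ∈ ℤ. Then there exists a group homomorphism ψ : S → ℤ with ψ(ι(n)) = n for all n ∈ ℤ if and only if χ(x) is even for every x ∈ S; and in that case the map x ↦ χ(x)/2 is such a splitting. -/
/-- For the short exact sequence `0 → ℤ → S → G → 0` with `G` torsion and
`χ ∘ ι = 2·`, the sequence splits iff `χ x` is even for all `x`, in which case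
`x ↦ χ x / 2` is a splitting. -/
theorem skk_even_dim_torsion_bordism_split_iff
    {S G : Type*} [AddCommGroup S] [AddCommGroup G]
    (ι : ℤ →+ S) (p : S →+ G)
    (hι : Function.Injective ι) (hp : Function.Surjective p)
    (hexact : ι.range = p.ker)
    (htor : ∀ g : G, ∃ k : ℕ, 0 < k ∧ k • g = 0)
    (χ : S →+ ℤ) (hχ : ∀ n : ℤ, χ (ι n) = 2 * n) :
    ((∃ ψ : S →+ ℤ, ∀ n : ℤ, ψ (ι n) = n) ↔ (∀ x : S, Even (χ x))) ∧
    ((∀ x : S, Even (χ x)) →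
      ∃ ψ : S →+ ℤ, (∀ n : ℤ, ψ (ι n) = n) ∧ ∀ x : S, ψ x = χ x / 2) := by
  have back : (∀ x : S, Even (χ x)) →
      ∃ ψ : S →+ ℤ, (∀ n : ℤ, ψ (ι n) = n) ∧ ∀ x : S, ψ x = χ x / 2 := by
    intro hev
    have h2 : ∀ x : S, 2 * (χ x / 2) = χ x := by
      intro x
      obtain ⟨r, hr⟩ := hev x
      rw [hr]; omega
    refine ⟨{ toFun := fun x => χ x / 2, map_zero' := by simp, map_add' := ?_ }, ?_, ?_⟩
    · intro x y
      show χ (x + y) / 2 = χ x / 2 + χ y / 2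
      have := h2 x; have := h2 y; have := h2 (x + y)
      have hadd : χ (x + y) = χ x + χ y := χ.map_add x y
      omega
    · intro n
      simp only [AddMonoidHom.coe_mk, ZeroHom.coe_mk]
      rw [hχ]; omega
    · intro x; rfl
  constructor
  · constructor
    · rintro ⟨ψ, hψ⟩ x
      obtain ⟨k, hk, hkx⟩ := htor (p x)
      have : p (k • x) = 0 := by rw [map_nsmul]; exact hkx
      have : k • x ∈ p.ker := this
      rw [← hexact] at this
      obtain ⟨m, hm⟩ := this
      have h1 : χ (k • x) = 2 * m := by rw [← hm, hχ]
      have h2 : ψ (k • x) = m := by rw [← hm, hψ]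
      rw [map_nsmul] at h1 h2
      have : (k : ℤ) * χ x = 2 * ((k : ℤ) * ψ x) := by
        rw [← h2] at h1; simpa [nsmul_eq_mul] using h1
      have hk0 : (k : ℤ) ≠ 0 := by exact_mod_cast hk.ne'
      have : χ x = 2 * ψ x := by
        have := mul_left_cancel₀ hk0 (by linarith : (k : ℤ) * χ x = (k:ℤ) * (2 * ψ x))
        exact this
      exact ⟨ψ x, by omega⟩
    · intro hev
      obtain ⟨ψ, hψ, _⟩ := back hev
      exact ⟨ψ, hψ⟩
  · exact back
end

section
/- Let k ≥ 1 and let ε : ℤ/2^k → ℤ/2 be the canonical reduction homomorphism. Then the pullback subgroup {(g, n) ∈ ℤ/2^k × ℤ : ε(g) = n mod 2} of ℤ/2^k × ℤ is isomorphic as an abelian group to ℤ × ℤ/2^{k−1}. -/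
noncomputable def iota (k : ℕ) (hk : 1 ≤ k) : ZMod (2 ^ (k-1)) →+ ZMod (2^k) :=
  ZMod.lift _ ⟨(2 : ℤ) • Int.castAddHom (ZMod (2^k)), by
    simp only [AddMonoidHom.smul_apply, Int.coe_castAddHom, zsmul_eq_mul]
    push_cast
    rw [← pow_succ', (by omega : k - 1 + 1 = k)]
    exact_mod_cast ZMod.natCast_self (2^k)⟩

lemma iota_coe (k : ℕ) (hk : 1 ≤ k) (m : ℤ) :
    iota k hk (m : ZMod (2^(k-1))) = ((2*m : ℤ) : ZMod (2^k)) := by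
  rw [iota, ZMod.lift_coe]
  simp only [AddMonoidHom.smul_apply, Int.coe_castAddHom, zsmul_eq_mul]
  push_cast; ring

noncomputable def psi (k : ℕ) (hk : 1 ≤ k) : ℤ × ZMod (2^(k-1)) →+ ZMod (2^k) × ℤ where
  toFun p := ((p.1 : ZMod (2^k)) + iota k hk p.2, p.1)
  map_zero' := by simp
  map_add' p q := by
    simp only [Prod.fst_add, Prod.snd_add, Int.cast_add, map_add, Prod.mk_add_mk,
      Prod.mk.injEq]
    constructor
    · ring
    · trivial

/-- For `k ≥ 1` and `ε : ℤ/2^k → ℤ/2` the canonical reduction, the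
pullback `(ℤ/2^k) ×_{ℤ/2} ℤ` is isomorphic to `ℤ × ℤ/2^(k-1)`. -/
theorem pullback_zmod_pow_two
    (k : ℕ) (hk : 1 ≤ k) :
    Nonempty
      ((pullbackZmodTwo
          ((ZMod.castHom (dvd_pow_self 2 (by omega : k ≠ 0)) (ZMod 2)).toAddMonoidHom :
            ZMod (2 ^ k) →+ ZMod 2))
        ≃+ ℤ × ZMod (2 ^ (k - 1))) := by
  set ε := ((ZMod.castHom (dvd_pow_self 2 (by omega : k ≠ 0)) (ZMod 2)).toAddMonoidHom :
      ZMod (2 ^ k) →+ ZMod 2)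
  have hpow : ((2:ℤ)^k) = 2 * 2^(k-1) := by
    rw [← pow_succ', (by omega : k - 1 + 1 = k)]
  have hmem : ∀ p : ℤ × ZMod (2^(k-1)), psi k hk p ∈ pullbackZmodTwo ε := by
    intro ⟨n, a⟩
    show ε ((n : ZMod (2^k)) + iota k hk a) = (n : ZMod 2)
    obtain ⟨c, rfl⟩ := ZMod.intCast_surjective (n := 2^(k-1)) a
    rw [iota_coe, map_add]
    simp only [ε, RingHom.toAddMonoidHom_eq_coe, AddMonoidHom.coe_coe, map_intCast]
    have h0 : ((2*c : ℤ) : ZMod 2) = 0 :=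
      (ZMod.intCast_zmod_eq_zero_iff_dvd _ 2).mpr ⟨c, by push_cast; ring⟩
    rw [h0, add_zero]
  let ψ := (psi k hk).codRestrict _ hmem
  have hinj : Function.Injective ψ := by
    intro ⟨n, a⟩ ⟨m, b⟩ h
    have h' : psi k hk (n, a) = psi k hk (m, b) := congrArg Subtype.val h
    have h2 : n = m := congrArg Prod.snd h'
    subst h2
    obtain ⟨c, rfl⟩ := ZMod.intCast_surjective (n := 2^(k-1)) a
    obtain ⟨d, rfl⟩ := ZMod.intCast_surjective (n := 2^(k-1)) b
    have h1 : (n : ZMod (2^k)) + iota k hk (c : ZMod (2^(k-1)))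
        = (n : ZMod (2^k)) + iota k hk (d : ZMod (2^(k-1))) := congrArg Prod.fst h'
    have h1' := add_left_cancel h1
    rw [iota_coe, iota_coe, ZMod.intCast_eq_intCast_iff] at h1'
    refine Prod.ext rfl ?_
    rw [ZMod.intCast_eq_intCast_iff, Int.modEq_iff_dvd]
    have hd := h1'.dvd
    push_cast at hd ⊢
    rw [hpow] at hd
    obtain ⟨t, ht⟩ := hd
    exact ⟨t, by linarith⟩
  have hsurj : Function.Surjective ψ := by
    rintro ⟨⟨g, n⟩, hg⟩
    have hg' : ε g = (n : ZMod 2) := hg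
    set c := (ZMod.cast g : ℤ) with hc
    have hgc : ((c : ℤ) : ZMod (2^k)) = g := ZMod.intCast_zmod_cast g
    have hcn : ((c : ℤ) : ZMod 2) = (n : ZMod 2) := by
      rw [← hg', ← hgc]
      simp [ε, map_intCast]
    rw [ZMod.intCast_eq_intCast_iff] at hcn
    have hdvd : (2:ℤ) ∣ c - n := by
      have h2 := hcn.dvd; push_cast at h2; omega
    obtain ⟨m, hm⟩ := hdvd
    refine ⟨(n, (m : ZMod (2^(k-1)))), ?_⟩
    apply Subtype.ext
    show ((n : ZMod (2^k)) + iota k hk _, n) = (g, n)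
    rw [iota_coe]
    refine Prod.ext ?_ rfl
    show ((n : ZMod (2^k)) + ((2*m : ℤ) : ZMod (2^k))) = g
    rw [← hm, ← hgc]
    push_cast
    ring
  exact ⟨(AddEquiv.ofBijective ψ ⟨hinj, hsurj⟩).symm⟩
end

section
/- Let ε : ℤ/8 × ℤ/2 → ℤ/2 be the homomorphism ε(x, y) = (x mod 2) + y, where x mod 2 denotes the image of x under the canonical reduction ℤ/8 → ℤ/2. Then the pullback subgroup {((x,y), n) ∈ (ℤ/8 × ℤ/2) × ℤ : ε(x,y) = n mod 2} is isomorphic as an abelian group to ℤ × ℤ/8. -/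
/-- For `ε : ℤ/8 × ℤ/2 → ℤ/2`, `ε(x,y) = (x mod 2) + y`, the pullback
`(ℤ/8 × ℤ/2) ×_{ℤ/2} ℤ` is isomorphic to `ℤ × ℤ/8`.  This computes `SKK^{Pin^c}_4`. -/
theorem pullback_pinc_four
    (ε : ZMod 8 × ZMod 2 →+ ZMod 2)
    (hε : ∀ (x : ZMod 8) (y : ZMod 2),
      ε (x, y) = ZMod.castHom (by norm_num : (2 : ℕ) ∣ 8) (ZMod 2) x + y) :
    Nonempty (pullbackZmodTwo ε ≃+ ℤ × ZMod 8) := by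
  refine ⟨{
    toFun := fun p => (p.1.2, p.1.1.1)
    invFun := fun q => ⟨((q.2, (q.1 : ZMod 2) -
        ZMod.castHom (by norm_num : (2 : ℕ) ∣ 8) (ZMod 2) q.2), q.1), ?_⟩
    left_inv := ?_
    right_inv := ?_
    map_add' := ?_ }⟩
  · show ε _ = _
    rw [hε]
    ring
  · rintro ⟨⟨⟨x, y⟩, n⟩, h⟩
    have h' : ε (x, y) = (n : ZMod 2) := h
    rw [hε] at h'
    ext
    · rfl
    · show (n : ZMod 2) - _ = y
      rw [← h']; ring
    · rfl
  · rintro ⟨n, x⟩; rfl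
  · rintro ⟨⟨⟨x, y⟩, n⟩, h⟩ ⟨⟨⟨x', y'⟩, n'⟩, h'⟩; rfl
end

section
/- Let ε : ℤ/4 × ℤ/2 → ℤ/2 be the homomorphism ε(x, y) = (x mod 2) + y, where x mod 2 denotes the image of x under the canonical reduction ℤ/4 → ℤ/2. Then the pullback subgroup {((x,y), n) ∈ (ℤ/4 × ℤ/2) × ℤ : ε(x,y) = n mod 2} is isomorphic as an abelian group to ℤ × ℤ/4. -/
/-- For `ε : ℤ/4 × ℤ/2 → ℤ/2`, `ε(x,y) = (x mod 2) + y`, the pullback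
`(ℤ/4 × ℤ/2) ×_{ℤ/2} ℤ` is isomorphic to `ℤ × ℤ/4`.  This computes `SKK^{G^+}_4`. -/
theorem pullback_gplus_four
    (ε : ZMod 4 × ZMod 2 →+ ZMod 2)
    (hε : ∀ (x : ZMod 4) (y : ZMod 2),
      ε (x, y) = ZMod.castHom (by norm_num : (2 : ℕ) ∣ 4) (ZMod 2) x + y) :
    Nonempty (pullbackZmodTwo ε ≃+ ℤ × ZMod 4) := by
  refine ⟨AddEquiv.symm
    { toFun := fun p => ⟨((p.2, (p.1 : ZMod 2) -
        ZMod.castHom (by norm_num : (2 : ℕ) ∣ 4) (ZMod 2) p.2), p.1), by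
        simp only [pullbackZmodTwo, AddSubgroup.mem_mk, Set.mem_setOf_eq]
        change ε (_, _) = _
        rw [hε]
        ring⟩
      invFun := fun q => (q.1.2, q.1.1.1)
      left_inv := by intro p; rfl
      right_inv := by
        rintro ⟨⟨⟨x, y⟩, n⟩, hq⟩
        simp only [pullbackZmodTwo, AddSubgroup.mem_mk, Set.mem_setOf_eq] at hq
        change ε (x, y) = ((n : ℤ) : ZMod 2) at hq
        rw [hε] at hq
        apply Subtype.ext
        simp only
        have : (n : ZMod 2) - ZMod.castHom (by norm_num : (2 : ℕ) ∣ 4) (ZMod 2) x = y := by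
          rw [← hq]; ring
        rw [this]
      map_add' := by
        intro p q
        apply Subtype.ext
        simp only [Prod.fst_add, Prod.snd_add, map_add, Int.cast_add, AddSubgroup.coe_add]
        ext <;> simp; ring }⟩
end

section
/- Let C be a category that is reversible, meaning that for every pair of objects Y, Z and every morphism f : Y → Z there exists some morphism Z → Y. Fix an object X of C and let L : C → Ĉ be the localization of C at the class of all morphisms (so that L(f) is an isomorphism for every morphism f of C). Then every endomorphism of L(X) in Ĉ belongs to the submonoid of the endomorphism monoid End(L(X)) generated by the set of all h : L(X) → L(X) such that either h = L(e) for some endomorphism e : X → X in C, or there exists an endomorphism e : X → X in C with h ∘ L(e) = id and L(e) ∘ h = id (that is, h is a two-sided inverse of L(e)). -/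
open CategoryTheory

set_option linter.unusedSectionVars false

namespace SKKAux

open scoped Classical

universe v₁ v₂ u₁ u₂

variable {C : Type u₁} {D : Type u₂} [Category.{v₁} C] [Category.{v₂} D]
variable (L : C ⥤ D) [L.IsLocalization ⊤] (X : C)

/-- The generating set. -/
def S : Set (End (L.obj X)) :=
  {h : End (L.obj X) |
    (∃ e : X ⟶ X, h = L.map e) ∨
    (∃ e : X ⟶ X, L.map e ≫ h = 𝟙 (L.obj X) ∧ h ≫ L.map e = 𝟙 (L.obj X))}

lemma isIso_map {Y Z : C} (f : Y ⟶ Z) : IsIso (L.map f) :=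
  Localization.inverts L ⊤ f trivial

lemma map_endo_mem (e : X ⟶ X) :
    (L.map e : End (L.obj X)) ∈ Submonoid.closure (S L X) :=
  Submonoid.subset_closure (Or.inl ⟨e, rfl⟩)

lemma comp_mem {a b : End (L.obj X)} (ha : a ∈ Submonoid.closure (S L X))
    (hb : b ∈ Submonoid.closure (S L X)) :
    (a ≫ b : End (L.obj X)) ∈ Submonoid.closure (S L X) :=
  mul_mem hb ha

lemma exists_inv {m : End (L.obj X)} (hm : m ∈ Submonoid.closure (S L X)) :
    ∃ m' ∈ Submonoid.closure (S L X),
      (m ≫ m' : End (L.obj X)) = 𝟙 (L.obj X) ∧ (m' ≫ m : End (L.obj X)) = 𝟙 (L.obj X) := by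
  induction hm using Submonoid.closure_induction with
  | mem x hx =>
    rcases hx with ⟨e, rfl⟩ | ⟨e, h1, h2⟩
    · haveI := isIso_map L e
      refine ⟨inv (L.map e), Submonoid.subset_closure (Or.inr ⟨e, by simp, by simp⟩),
        by simp, by simp⟩
    · exact ⟨L.map e, map_endo_mem L X e, h2, h1⟩
  | one => exact ⟨𝟙 (L.obj X), Submonoid.one_mem _, by simp, by simp⟩
  | mul x y hx hy ihx ihy =>
    obtain ⟨x', hx', hx1, hx2⟩ := ihx
    obtain ⟨y', hy', hy1, hy2⟩ := ihy
    refine ⟨(x' ≫ y' : End (L.obj X)), comp_mem L X hx' hy', ?_, ?_⟩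
    · show (y ≫ x) ≫ x' ≫ y' = 𝟙 (L.obj X)
      rw [Category.assoc, ← Category.assoc x x' y', hx1, Category.id_comp, hy1]
    · show (x' ≫ y') ≫ y ≫ x = 𝟙 (L.obj X)
      rw [Category.assoc, ← Category.assoc y' y x, hy2, Category.id_comp, hx2]

/-- The relation: two maps `L.obj X ⟶ A` differ by precomposition by an
element of the closure. -/
def rel (A : D) (g g' : L.obj X ⟶ A) : Prop :=
  ∃ m ∈ Submonoid.closure (S L X), g = (m : L.obj X ⟶ L.obj X) ≫ g'

lemma rel_equivalence (A : D) : Equivalence (rel L X A) where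
  refl g := ⟨𝟙 (L.obj X), Submonoid.one_mem _, (Category.id_comp g).symm⟩
  symm := by
    rintro g g' ⟨m, hm, rfl⟩
    obtain ⟨m', hm', h1, h2⟩ := exists_inv L X hm
    exact ⟨m', hm', by rw [← Category.assoc, h2, Category.id_comp]⟩
  trans := by
    rintro g g' g'' ⟨m₁, hm₁, rfl⟩ ⟨m₂, hm₂, rfl⟩
    exact ⟨(m₁ ≫ m₂ : End (L.obj X)), comp_mem L X hm₁ hm₂, (Category.assoc _ _ _).symm⟩

/-- The "covering" functor. -/
noncomputable def Phi : D ⥤ Type v₂ where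
  obj A := Quot (rel L X A) ⊕ PUnit.{v₂ + 1}
  map {A B} k := TypeCat.ofHom (Sum.map
    (Quot.map (fun g => g ≫ k)
      (by rintro g g' ⟨m, hm, rfl⟩; exact ⟨m, hm, by rw [Category.assoc]⟩)) id)
  map_id A := by
    ext t
    rcases t with t | t
    · induction t using Quot.ind with
      | _ g => simp [Quot.map]
    · rfl
  map_comp {A B B'} k k' := by
    ext t
    rcases t with t | t
    · induction t using Quot.ind with
      | _ g => simp [Quot.map, types_comp_apply]
    · rfl

/-- The flat section. -/
noncomputable def sec (Y : C) : (Phi L X).obj (L.obj Y) :=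
  if h : Nonempty (X ⟶ Y) then Sum.inl (Quot.mk _ (L.map h.some)) else Sum.inr PUnit.unit

lemma sec_natural (hrev : ∀ {Y Z : C}, (Y ⟶ Z) → Nonempty (Z ⟶ Y)) {Y Z : C} (f : Y ⟶ Z) :
    (Phi L X).map (L.map f) (sec L X Y) = sec L X Z := by
  by_cases hY : Nonempty (X ⟶ Y)
  · have hZ : Nonempty (X ⟶ Z) := ⟨hY.some ≫ f⟩
    rw [show sec L X Y = Sum.inl (Quot.mk _ (L.map hY.some)) from dif_pos hY,
      show sec L X Z = Sum.inl (Quot.mk _ (L.map hZ.some)) from dif_pos hZ]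
    show Sum.inl (Quot.mk _ (L.map hY.some ≫ L.map f)) = Sum.inl (Quot.mk _ (L.map hZ.some))
    congr 1
    apply Quot.sound
    set qY := hY.some
    set qZ := hZ.some
    obtain ⟨pZ⟩ := hrev qZ
    obtain ⟨m', hm', h1, h2⟩ := exists_inv L X (map_endo_mem L X (qZ ≫ pZ))
    haveI := isIso_map L qZ
    have key : L.map pZ ≫ m' ≫ L.map qZ = 𝟙 (L.obj Z) := by
      rw [← cancel_epi (L.map qZ), Category.comp_id, ← Category.assoc, ← Category.assoc,
        ← L.map_comp, show L.map (qZ ≫ pZ) ≫ m' = 𝟙 (L.obj X) from h1, Category.id_comp]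
    refine ⟨(L.map (qY ≫ f ≫ pZ) ≫ m' : End (L.obj X)),
      comp_mem L X (map_endo_mem L X _) hm', ?_⟩
    rw [Category.assoc, L.map_comp, L.map_comp, Category.assoc, Category.assoc, key,
      Category.comp_id]
  · have hZ : ¬ Nonempty (X ⟶ Z) := by
      rintro ⟨q⟩
      obtain ⟨f'⟩ := hrev f
      exact hY ⟨q ≫ f'⟩
    rw [show sec L X Y = Sum.inr PUnit.unit from dif_neg hY,
      show sec L X Z = Sum.inr PUnit.unit from dif_neg hZ]
    rfl

/-- The section as a natural transformation on `C`. -/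
noncomputable def tau (hrev : ∀ {Y Z : C}, (Y ⟶ Z) → Nonempty (Z ⟶ Y)) :
    (Functor.const C).obj PUnit.{v₂ + 1} ⟶ L ⋙ Phi L X where
  app Y := TypeCat.ofHom (fun _ => sec L X Y)
  naturality Y Z f := by
    ext t
    exact (sec_natural L X hrev f).symm

theorem main (hrev : ∀ {Y Z : C}, (Y ⟶ Z) → Nonempty (Z ⟶ Y)) (h : End (L.obj X)) :
    h ∈ Submonoid.closure (S L X) := by
  letI : Localization.Lifting L ⊤ (L ⋙ Phi L X) (Phi L X) := ⟨Iso.refl _⟩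
  letI : Localization.Lifting L ⊤ ((Functor.const C).obj PUnit.{v₂ + 1})
      ((Functor.const D).obj PUnit.{v₂ + 1}) :=
    ⟨NatIso.ofComponents (fun Y => Iso.refl _) (by intros; rfl)⟩
  let σ : (Functor.const D).obj PUnit.{v₂ + 1} ⟶ Phi L X :=
    Localization.liftNatTrans L ⊤ ((Functor.const C).obj PUnit.{v₂ + 1}) (L ⋙ Phi L X)
      ((Functor.const D).obj PUnit.{v₂ + 1}) (Phi L X) (tau L X hrev)
  -- compute σ at L.obj X
  have happ : σ.app (L.obj X) PUnit.unit = sec L X X := by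
    have := Localization.liftNatTrans_app L ⊤ ((Functor.const C).obj PUnit.{v₂ + 1})
      (L ⋙ Phi L X) ((Functor.const D).obj PUnit.{v₂ + 1}) (Phi L X) (tau L X hrev) X
    rw [show σ.app (L.obj X) = _ from this]
    simp only [types_comp_apply]
    have e1 : (Localization.Lifting.iso L ⊤ ((Functor.const C).obj PUnit.{v₂ + 1})
        ((Functor.const D).obj PUnit.{v₂ + 1})).hom.app X PUnit.unit = PUnit.unit := rfl
    have e2 : ∀ t, (Localization.Lifting.iso L ⊤ (L ⋙ Phi L X) (Phi L X)).inv.app X t = t :=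
      fun t => rfl
    rw [e1, e2]
    rfl
  -- naturality of σ at h
  have hnat := σ.naturality (h : L.obj X ⟶ L.obj X)
  have hfix : (Phi L X).map h (sec L X X) = sec L X X := by
    have := types_congr_hom hnat PUnit.unit
    simp only [types_comp_apply] at this
    rw [happ] at this
    exact this.symm.trans (by rw [show ((Functor.const D).obj PUnit.{v₂ + 1}).map
      (h : L.obj X ⟶ L.obj X) PUnit.unit = PUnit.unit from rfl, happ])
  -- unravel
  have hX : Nonempty (X ⟶ X) := ⟨𝟙 X⟩
  rw [show sec L X X = Sum.inl (Quot.mk _ (L.map hX.some)) from dif_pos hX] at hfix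
  set e₀ := hX.some with he₀
  have hq : Quot.mk (rel L X (L.obj X)) (L.map e₀ ≫ h) = Quot.mk (rel L X (L.obj X)) (L.map e₀) := by
    have : Sum.inl (Quot.mk (rel L X (L.obj X)) (L.map e₀ ≫ h)) =
        (Sum.inl (Quot.mk (rel L X (L.obj X)) (L.map e₀)) :
          Quot (rel L X (L.obj X)) ⊕ PUnit.{v₂ + 1}) := hfix
    exact Sum.inl.inj this
  have hrel : rel L X (L.obj X) (L.map e₀ ≫ h) (L.map e₀) :=
    ((rel_equivalence L X (L.obj X)).eqvGen_iff).mp (Quot.eqvGen_exact hq)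
  obtain ⟨m, hm, heq⟩ := hrel
  haveI := isIso_map L e₀
  have : h = inv (L.map e₀) ≫ m ≫ L.map e₀ := by
    rw [← heq, ← Category.assoc, IsIso.inv_hom_id, Category.id_comp]
  rw [this]
  have hinv : (inv (L.map e₀) : End (L.obj X)) ∈ Submonoid.closure (S L X) :=
    Submonoid.subset_closure (Or.inr ⟨e₀, by simp, by simp⟩)
  exact comp_mem L X hinv (comp_mem L X hm (map_endo_mem L X e₀))

end SKKAux

/-- If `C` is a reversible category and `L : C ⥤ D` is the localization
of `C` at all morphisms, then every endomorphism of `L.obj X` lies in the submonoid of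
`End (L.obj X)` generated by the images `L.map e` of endomorphisms `e : X ⟶ X` of `C`
together with the (two-sided) inverses of such images. -/
theorem endomorphisms_of_localization_generated_by_images
    {C D : Type*} [Category C] [Category D]
    (L : C ⥤ D) [L.IsLocalization ⊤]
    (hrev : ∀ {Y Z : C}, (Y ⟶ Z) → Nonempty (Z ⟶ Y))
    (X : C) :
    ∀ h : End (L.obj X),
      h ∈ Submonoid.closure
        {h : End (L.obj X) |
          (∃ e : X ⟶ X, h = L.map e) ∨
          (∃ e : X ⟶ X, L.map e ≫ h = 𝟙 (L.obj X) ∧ h ≫ L.map e = 𝟙 (L.obj X))} := by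
  intro h
  exact SKKAux.main L X hrev h
end
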